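/- arXiv:1506.02742 — 8 statements merged into one kernel-verified Lean document; each statement's English description precedes it below -/
import Mathlib

section
/- Let p be a prime, i ≥ 0, and x_1,...,x_n ∈ {0,1,...,p-1} viewed as elements of F_p. Then the i-th base-p digit of the integer x_1 + ... + x_n, regarded as an element of F_p, equals the sum over all tuples (d_1,...,d_n) with each d_j ∈ {0,...,p-1} and d_1 + ... + d_n = p^i, of ∏_{j=1}^n (1/d_j!) · x_j(x_j - 1)···(x_j - d_j + 1), computed in F_p (where 1/d_j! denotes the inverse of d_j! in F_p). -/
open Finset

private lemma descPochhammer_eval_prod {R : Type*} [CommRing R] (d : ℕ) (x : R) :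
    (descPochhammer R d).eval x = ∏ k ∈ Finset.range d, (x - k) := by
  induction d with
  | zero => simp
  | succ d ih => rw [descPochhammer_succ_eval, ih, Finset.prod_range_succ]

private lemma vand : ∀ (n : ℕ) (v : Fin n → ℕ) (m : ℕ),
    (∑ j, v j).choose m = ∑ d ∈ Finset.finAntidiagonal n m, ∏ j, (v j).choose (d j) := by
  intro n
  induction n with
  | zero =>
    intro v m
    match m with
    | 0 =>
      have h : Finset.finAntidiagonal 0 (0 : ℕ) = {0} := by
        apply Finset.eq_singleton_iff_unique_mem.mpr
        constructor
        · simp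
        · intro f _; funext j; exact j.elim0
      simp [h]
    | m + 1 =>
      have h : Finset.finAntidiagonal 0 (m + 1 : ℕ) = ∅ := by
        apply Finset.eq_empty_iff_forall_notMem.mpr
        intro f hf
        simp only [Finset.mem_finAntidiagonal] at hf
        simp at hf
      simp [h]
  | succ n ih =>
    intro v m
    rw [Fin.sum_univ_succ, Nat.add_choose_eq]
    simp_rw [ih (fun j => v j.succ), Finset.mul_sum]
    rw [Finset.sum_sigma' (Finset.HasAntidiagonal.antidiagonal m)
      (fun p => Finset.finAntidiagonal n p.2)
      (fun p d => (v 0).choose p.1 * ∏ j, (v j.succ).choose (d j))]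
    refine Finset.sum_nbij' (fun e => Fin.cons e.1.1 e.2)
      (fun d => ⟨(d 0, ∑ j, d (Fin.succ j)), fun j => d (Fin.succ j)⟩) ?_ ?_ ?_ ?_ ?_
    · rintro ⟨⟨a, b⟩, d⟩ he
      simp only [Finset.mem_sigma, Finset.HasAntidiagonal.mem_antidiagonal,
        Finset.mem_finAntidiagonal] at he ⊢
      rw [Fin.sum_cons, he.2, he.1]
    · intro d hd
      simp only [Finset.mem_finAntidiagonal] at hd
      simp only [Finset.mem_sigma, Finset.HasAntidiagonal.mem_antidiagonal, Finset.mem_finAntidiagonal]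
      exact ⟨by rw [← hd, Fin.sum_univ_succ], trivial⟩
    · rintro ⟨⟨a, b⟩, d⟩ he
      simp only [Finset.mem_sigma, Finset.HasAntidiagonal.mem_antidiagonal, Finset.mem_finAntidiagonal] at he
      refine Sigma.ext ?_ (heq_of_eq ?_)
      · simp only [Fin.cons_zero, Fin.cons_succ, Prod.mk.injEq]
        exact ⟨trivial, he.2⟩
      · funext j
        simp [Fin.cons_succ]
    · intro d hd
      exact Fin.cons_self_tail d
    · rintro ⟨⟨a, b⟩, d⟩ he
      rw [Fin.prod_univ_succ]
      simp [Fin.cons_zero, Fin.cons_succ]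

private lemma lucas_digit (p : ℕ) (hp : p.Prime) : ∀ (i S : ℕ),
    ((S.choose (p ^ i) : ℕ) : ZMod p) = ((S / p ^ i % p : ℕ) : ZMod p) := by
  haveI := Fact.mk hp
  intro i
  induction i with
  | zero =>
    intro S
    simp [Nat.choose_one_right, ZMod.natCast_mod]
  | succ i ih =>
    intro S
    have h := Choose.choose_modEq_choose_mod_mul_choose_div_nat (p := p) (n := S)
      (k := p ^ (i + 1))
    rw [← ZMod.natCast_eq_natCast_iff] at h
    have h1 : p ^ (i + 1) % p = 0 := by
      rw [pow_succ, Nat.mul_mod_left]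
    have h2 : p ^ (i + 1) / p = p ^ i := by
      rw [pow_succ, Nat.mul_div_cancel _ hp.pos]
    rw [h, h1, h2, Nat.choose_zero_right, Nat.cast_mul, Nat.cast_one, one_mul,
      ih (S / p), Nat.div_div_eq_div_mul, ← pow_succ']

private lemma choose_cast_eq {p : ℕ} (hp : p.Prime) (d : ℕ) (hd : d < p) (x : ZMod p) :
    ((x.val.choose d : ℕ) : ZMod p)
      = ((d.factorial : ZMod p))⁻¹ * ∏ k ∈ Finset.range d, (x - (k : ZMod p)) := by
  haveI := Fact.mk hp
  have hfac : ((d.factorial : ℕ) : ZMod p) ≠ 0 := by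
    rw [Ne, ZMod.natCast_eq_zero_iff]
    intro hdvd
    exact absurd (hp.dvd_factorial.mp hdvd) (not_le.mpr hd)
  have key : ∏ k ∈ Finset.range d, (x - (k : ZMod p)) = ((x.val.descFactorial d : ℕ) : ZMod p) := by
    rw [← descPochhammer_eval_eq_descFactorial (ZMod p) x.val d, descPochhammer_eval_prod]
    congr 1
    rw [ZMod.natCast_val, ZMod.cast_id]
  rw [key, Nat.descFactorial_eq_factorial_mul_choose, Nat.cast_mul, ← mul_assoc,
    inv_mul_cancel₀ hfac, one_mul]

theorem stmt_5 (p i n : ℕ) (hp : p.Prime) (x : Fin n → ZMod p) :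
    (((∑ j, (x j).val) / p ^ i % p : ℕ) : ZMod p)
      = ∑ d ∈ Finset.univ.filter (fun d : Fin n → Fin p => ∑ j, (d j : ℕ) = p ^ i),
          ∏ j : Fin n,
            (((d j : ℕ).factorial : ZMod p))⁻¹ *
              ∏ k ∈ Finset.range (d j : ℕ), (x j - (k : ZMod p)) := by
  haveI := Fact.mk hp
  set v : Fin n → ℕ := fun j => (x j).val with hv
  have hvlt : ∀ j, v j < p := fun j => ZMod.val_lt (x j)
  rw [← lucas_digit p hp i (∑ j, v j), vand n v (p ^ i), Nat.cast_sum]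
  simp_rw [Nat.cast_prod]
  -- restrict to tuples with all entries < p
  rw [← Finset.sum_filter_of_ne (p := fun d : Fin n → ℕ => ∀ j, d j < p)
    (by
      intro d hd hne j
      by_contra hge
      push_neg at hge
      exact hne (Finset.prod_eq_zero (Finset.mem_univ j)
        (by rw [Nat.choose_eq_zero_of_lt (lt_of_lt_of_le (hvlt j) hge), Nat.cast_zero])))]
  refine Finset.sum_nbij' (fun d => fun j : Fin n => (⟨d j % p, Nat.mod_lt _ hp.pos⟩ : Fin p))
    (fun e => fun j : Fin n => (e j : ℕ)) ?_ ?_ ?_ ?_ ?_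
  · intro d hd
    simp only [Finset.mem_filter, Finset.mem_finAntidiagonal, Finset.mem_univ, true_and] at hd ⊢
    rw [← hd.1]
    exact Finset.sum_congr rfl fun j _ => Nat.mod_eq_of_lt (hd.2 j)
  · intro e he
    simp only [Finset.mem_filter, Finset.mem_univ, true_and] at he
    simp only [Finset.mem_filter, Finset.mem_finAntidiagonal]
    exact ⟨he, fun j => (e j).isLt⟩
  · intro d hd
    simp only [Finset.mem_filter, Finset.mem_finAntidiagonal] at hd
    funext j
    exact Nat.mod_eq_of_lt (hd.2 j)
  · intro e he
    funext j
    exact Fin.ext (Nat.mod_eq_of_lt (e j).isLt)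
  · intro d hd
    simp only [Finset.mem_filter, Finset.mem_finAntidiagonal] at hd
    refine Finset.prod_congr rfl fun j _ => ?_
    have hdj : d j % p = d j := Nat.mod_eq_of_lt (hd.2 j)
    simp only [hdj]
    exact choose_cast_eq hp (d j) (hd.2 j) (x j)
end

section
/- Let p = 2 and i ≥ 0. For x_1,...,x_n ∈ F_2, the i-th binary digit of the integer sum (x_1)_Z + ... + (x_n)_Z, regarded as an element of F_2, equals the elementary symmetric polynomial e_{2^i}(x_1,...,x_n) evaluated over F_2. -/
lemma digit_eq_choose (m i : ℕ) :
    ((m / 2 ^ i % 2 : ℕ) : ZMod 2) = (m.choose (2 ^ i) : ZMod 2) := by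
  induction i generalizing m with
  | zero => simp only [pow_zero, Nat.div_one, Nat.choose_one_right, ZMod.natCast_mod]
  | succ i ih =>
    have h := @Choose.choose_modEq_choose_mod_mul_choose_div_nat m (2 ^ (i + 1)) 2 ⟨Nat.prime_two⟩
    have h2 : 2 ^ (i + 1) % 2 = 0 := by simp [pow_succ, Nat.mul_mod_left]
    have h3 : 2 ^ (i + 1) / 2 = 2 ^ i := by rw [pow_succ]; simp
    rw [h2, h3, Nat.choose_zero_right, one_mul] at h
    have : (m.choose (2 ^ (i + 1)) : ZMod 2) = ((m / 2).choose (2 ^ i) : ZMod 2) := by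
      exact_mod_cast (ZMod.natCast_eq_natCast_iff _ _ _).mpr h
    rw [this, ← ih (m / 2), Nat.div_div_eq_div_mul, ← pow_succ']

theorem stmt_6 (i n : ℕ) (x : Fin n → ZMod 2) :
    (((∑ j, (x j).val) / 2 ^ i % 2 : ℕ) : ZMod 2)
      = ∑ S ∈ Finset.powersetCard (2 ^ i) (Finset.univ : Finset (Fin n)),
          ∏ j ∈ S, x j := by
  classical
  set A : Finset (Fin n) := Finset.univ.filter (fun j => x j = 1) with hA
  have hcases : ∀ a : ZMod 2, a = 0 ∨ a = 1 := by decide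
  have hval : ∀ j, (x j).val = if x j = 1 then 1 else 0 := by
    intro j
    rcases hcases (x j) with h | h <;> simp [h] <;> rfl
  have hsum : (∑ j, (x j).val) = A.card := by
    rw [hA, Finset.card_filter]
    exact Finset.sum_congr rfl fun j _ => hval j
  have hprod : ∀ S : Finset (Fin n), (∏ j ∈ S, x j) = if S ⊆ A then 1 else 0 := by
    intro S
    split_ifs with h
    · apply Finset.prod_eq_one
      intro j hj
      have := h hj
      simp [hA] at this
      exact this
    · obtain ⟨j, hjS, hjA⟩ := Finset.not_subset.mp h
      apply Finset.prod_eq_zero hjS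
      simp [hA] at hjA
      rcases hcases (x j) with h | h
      · exact h
      · exact absurd h hjA
  have hrhs : (∑ S ∈ Finset.powersetCard (2 ^ i) (Finset.univ : Finset (Fin n)),
      ∏ j ∈ S, x j) = ((Finset.powersetCard (2 ^ i) A).card : ZMod 2) := by
    rw [Finset.sum_congr rfl fun S _ => hprod S, Finset.sum_boole]
    have : (Finset.powersetCard (2 ^ i) (Finset.univ : Finset (Fin n))).filter (· ⊆ A)
        = Finset.powersetCard (2 ^ i) A := by
      ext S
      simp [Finset.mem_powersetCard, and_comm]
    rw [this]
  rw [hrhs, Finset.card_powersetCard, hsum, digit_eq_choose]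
end

section
/- Let p be a prime and x_1, x_2 ∈ F_p. The carry in the addition of the two single base-p digits, i.e., ⌊((x_1)_Z + (x_2)_Z)/p⌋ regarded as an element of F_p, equals ∑_{d=1}^{p-1} (-1)^d (1/d) · x_1(x_1-1)···(x_1-d+1) · x_2(x_2-1)···(x_2-(p-d)+1), computed in F_p. -/
open Finset Nat

lemma ratkey : ∀ (n : ℕ) (x : ℚ), (∀ j ∈ range (n+1), x + j ≠ 0) →
    ∑ j ∈ range (n+1), (-1:ℚ)^j * (n.choose j) / (x + j)
      = (n ! : ℚ) / ∏ j ∈ range (n+1), (x + j) := by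
  intro n
  induction n with
  | zero => intro x hx; simp
  | succ n ih =>
    intro x hx
    have hx0 : x ≠ 0 := by simpa using hx 0 (by simp)
    have hx1 : ∀ j ∈ range (n+1), (x+1) + j ≠ 0 := by
      intro j hj
      have h := hx (j+1) (by simp at hj ⊢; omega)
      push_cast at h ⊢
      intro hc; exact h (by linarith)
    have hxsub : ∀ j ∈ range (n+1), x + j ≠ 0 := by
      intro j hj; exact hx j (by simp at hj ⊢; omega)
    have key : ∑ j ∈ range (n+2), (-1:ℚ)^j * ((n+1).choose j) / (x + j)
        = (∑ j ∈ range (n+1), (-1:ℚ)^j * (n.choose j) / (x + j))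
          - ∑ j ∈ range (n+1), (-1:ℚ)^j * (n.choose j) / ((x+1) + j) := by
      rw [Finset.sum_range_succ' _ (n+1)]
      have expand : ∀ j ∈ range (n+1),
          (-1:ℚ)^(j+1) * (((n+1).choose (j+1) : ℕ) : ℚ) / (x + ((j+1 : ℕ) : ℚ))
            = (-((-1:ℚ)^j * (n.choose j) / ((x+1) + (j:ℚ))))
              + (-1:ℚ)^(j+1) * (n.choose (j+1)) / (x + ((j+1 : ℕ) : ℚ)) := by
        intro j hj
        rw [Nat.choose_succ_succ]
        push_cast
        ring
      rw [Finset.sum_congr rfl expand, Finset.sum_add_distrib]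
      have hS3 : ∑ j ∈ range (n+1), (-1:ℚ)^(j+1) * (n.choose (j+1)) / (x + ((j+1:ℕ):ℚ))
          = ∑ j ∈ range n, (-1:ℚ)^(j+1) * (n.choose (j+1)) / (x + ((j+1:ℕ):ℚ)) := by
        rw [Finset.sum_range_succ, Nat.choose_succ_self]
        simp
      have hS1 : ∑ j ∈ range (n+1), (-1:ℚ)^j * (n.choose j) / (x + j)
          = (∑ j ∈ range n, (-1:ℚ)^(j+1) * (n.choose (j+1)) / (x + ((j+1:ℕ):ℚ)))
            + (-1:ℚ)^0 * (n.choose 0) / (x + ((0:ℕ):ℚ)) := by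
        rw [Finset.sum_range_succ']
      rw [hS3, hS1]
      simp only [Finset.sum_neg_distrib, Nat.choose_zero_right, Nat.cast_zero, Nat.cast_one,
        pow_zero, one_mul, add_zero]
      ring
    rw [key, ih x hxsub, ih (x+1) hx1]
    set P := ∏ j ∈ range (n+1), (x + (j:ℚ)) with hPdef
    set P' := ∏ j ∈ range (n+1), ((x+1) + (j:ℚ)) with hP'def
    have hQ1 : ∏ j ∈ range (n+2), (x + (j:ℚ)) = P * (x + ((n:ℚ)+1)) := by
      rw [Finset.prod_range_succ, ← hPdef]
      push_cast
      ring
    have hQ2 : ∏ j ∈ range (n+2), (x + (j:ℚ)) = x * P' := by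
      rw [Finset.prod_range_succ']
      rw [Finset.prod_congr rfl
        (fun j _ => show (x + ((j+1:ℕ):ℚ)) = (x+1) + (j:ℚ) by push_cast; ring), ← hP'def]
      push_cast
      ring
    set Q := ∏ j ∈ range (n+2), (x + (j:ℚ)) with hQdef
    have hP : P ≠ 0 := Finset.prod_ne_zero_iff.2 hxsub
    have hP' : P' ≠ 0 := Finset.prod_ne_zero_iff.2 hx1
    have hQ : Q ≠ 0 := by rw [hQ2]; exact mul_ne_zero hx0 hP'
    rw [div_sub_div _ _ hP hP', div_eq_div_iff (mul_ne_zero hP hP') hQ]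
    push_cast [Nat.factorial_succ]
    linear_combination ((n ! : ℚ) * P') * hQ1 - ((n ! : ℚ) * P) * hQ2

lemma prod_cast_asc (m k : ℕ) : ∏ j ∈ range k, ((m:ℚ)+j) = (m.ascFactorial k : ℚ) := by
  induction k with
  | zero => simp
  | succ k ih =>
    rw [Finset.prod_range_succ, ih, Nat.ascFactorial_succ]
    push_cast
    ring

lemma ratkey2 (n m : ℕ) (hm : 1 ≤ m) :
    ∑ j ∈ range (n+1),
        (-1:ℚ)^j * ((m+n).descFactorial (m+j)) / (((m+j : ℕ) : ℚ) * ((j ! : ℚ) * ((m-1)! : ℚ)))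
      = 1 := by
  have hxne : ∀ j ∈ range (n+1), ((m:ℚ)) + (j:ℚ) ≠ 0 := by
    intro j hj
    have : (0:ℚ) < m + j := by
      have : (1:ℚ) ≤ (m:ℚ) := by exact_mod_cast hm
      positivity
    linarith
  have hprod : ∏ j ∈ range (n+1), ((m:ℚ)+j) = ((m+n)! : ℚ) / ((m-1)! : ℚ) := by
    rw [prod_cast_asc, eq_div_iff (by exact_mod_cast (m-1).factorial_ne_zero), mul_comm]
    have := Nat.factorial_mul_ascFactorial' m (n+1) hm
    have h2 : m + (n+1) - 1 = m + n := by omega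
    rw [h2] at this
    exact_mod_cast this
  have h1 : ∀ j ∈ range (n+1),
      (-1:ℚ)^j * ((m+n).descFactorial (m+j)) / (((m+j : ℕ) : ℚ) * ((j ! : ℚ) * ((m-1)! : ℚ)))
        = (((m+n)! : ℚ)/(((m-1)! : ℚ) * (n ! : ℚ))) * ((-1:ℚ)^j * (n.choose j)/((m:ℚ)+(j:ℚ))) := by
    intro j hj
    have hjn : j ≤ n := by simp at hj; omega
    have hF : ((n-j)! : ℚ) ≠ 0 := by exact_mod_cast (n-j).factorial_ne_zero
    have hD : (((m+n).descFactorial (m+j) : ℕ) : ℚ) = ((m+n)! : ℚ) / ((n-j)! : ℚ) := by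
      rw [eq_div_iff hF]
      have := Nat.factorial_mul_descFactorial (show m+j ≤ m+n by omega)
      have h2 : m + n - (m+j) = n - j := by omega
      rw [h2] at this
      exact_mod_cast (by rw [mul_comm] at this; exact this)
    have hC : ((n.choose j : ℕ) : ℚ) = (n ! : ℚ) / ((j ! : ℚ) * ((n-j)! : ℚ)) := by
      rw [eq_div_iff (mul_ne_zero (by exact_mod_cast j.factorial_ne_zero) hF)]
      exact_mod_cast congrArg (Nat.cast : ℕ → ℚ)
        (by rw [← mul_assoc] at *; exact Nat.choose_mul_factorial_mul_factorial hjn)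
    rw [hD, hC]
    have hmj : ((m+j : ℕ) : ℚ) = (m:ℚ) + (j:ℚ) := by push_cast; ring
    rw [hmj]
    have hmj0 : (m:ℚ) + (j:ℚ) ≠ 0 := hxne j hj
    field_simp
  rw [Finset.sum_congr rfl h1, ← Finset.mul_sum, ratkey n m hxne, hprod]
  have hfac1 : ((m-1)! : ℚ) ≠ 0 := by exact_mod_cast (m-1).factorial_ne_zero
  have hfac2 : (n ! : ℚ) ≠ 0 := by exact_mod_cast n.factorial_ne_zero
  have hfac3 : ((m+n)! : ℚ) ≠ 0 := by exact_mod_cast (m+n).factorial_ne_zero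
  field_simp

lemma intkey (n m : ℕ) (hm : 1 ≤ m) :
    ∑ j ∈ range (n+1), (-1:ℤ)^j * (((m+n).descFactorial (m+j) : ℕ) : ℤ)
        * ((((m+n)! / ((m+j) * (j ! * (m-1)!)) : ℕ) : ℕ) : ℤ)
      = (((m+n)! : ℕ) : ℤ) := by
  have hdvd : ∀ j, j ≤ n → (m+j) * (j ! * (m-1)!) ∣ (m+n)! := by
    intro j hj
    have h1 : j ! * (m-1)! ∣ (j + (m-1))! := Nat.factorial_mul_factorial_dvd_factorial_add _ _
    have h2 : (m+j) * (j + (m-1))! = (m+j)! := by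
      have e : m + j = (j + (m-1)) + 1 := by omega
      rw [e, Nat.factorial_succ]
    have h3 : (m+j) * (j ! * (m-1)!) ∣ (m+j) * (j + (m-1))! :=
      mul_dvd_mul_left _ h1
    rw [h2] at h3
    exact h3.trans (Nat.factorial_dvd_factorial (by omega))
  have key : ∑ j ∈ range (n+1), (-1:ℚ)^j * (((m+n).descFactorial (m+j) : ℕ) : ℚ)
        * ((((m+n)! / ((m+j) * (j ! * (m-1)!)) : ℕ) : ℕ) : ℚ)
      = (((m+n)! : ℕ) : ℚ) := by
    have h := ratkey2 n m hm
    have h2 := congrArg (fun z : ℚ => (((m+n)! : ℕ) : ℚ) * z) h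
    simp only [Finset.mul_sum, mul_one] at h2
    rw [← h2]
    apply Finset.sum_congr rfl
    intro j hj
    have hjn : j ≤ n := by simp at hj; omega
    have hden0 : ((m+j) * (j ! * (m-1)!) : ℕ) ≠ 0 := by
      positivity
    have hdenQ : (((m+j) * (j ! * (m-1)!) : ℕ) : ℚ) ≠ 0 := by exact_mod_cast hden0
    rw [Nat.cast_div (hdvd j hjn) hdenQ]
    push_cast
    field_simp
  qify
  push_cast at key ⊢
  exact key

lemma wilson_fac (p : ℕ) [hpf : Fact p.Prime] :
    ∀ j, j ≤ p - 1 → (((p-1-j)! : ℕ) : ZMod p) * ((j ! : ℕ) : ZMod p) = (-1:ZMod p)^(j+1) := by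
  intro j
  induction j with
  | zero => intro _; simp [ZMod.wilsons_lemma]
  | succ j ih =>
    intro hj
    have hp2 : 2 ≤ p := hpf.out.two_le
    have ih' := ih (by omega)
    have e1 : p - 1 - j = (p - 1 - (j+1)) + 1 := by omega
    have e2 : ((p - 1 - j : ℕ) : ZMod p) = -(((j+1 : ℕ) : ℕ) : ZMod p) := by
      have h := congrArg (Nat.cast : ℕ → ZMod p) (show (p - 1 - j) + (j+1) = p by omega)
      rw [Nat.cast_add, ZMod.natCast_self] at h
      exact eq_neg_of_add_eq_zero_left h
    have hfs : ((p-1-j)! : ℕ) = (p-1-j) * (p-1-(j+1))! := by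
      rw [e1, Nat.factorial_succ, ← e1]
    rw [hfs, Nat.cast_mul, e2] at ih'
    rw [Nat.factorial_succ, Nat.cast_mul]
    push_cast at ih' ⊢
    linear_combination -ih'

lemma fac_ne (p k : ℕ) (hp : p.Prime) (h : k < p) : ((k ! : ℕ) : ZMod p) ≠ 0 := by
  rw [Ne, ZMod.natCast_eq_zero_iff]
  intro hd
  have := (Nat.Prime.dvd_factorial hp).1 hd
  omega

lemma prod_asc_zmod (p m t : ℕ) : ∏ k ∈ range t, ((m : ZMod p) + (k : ZMod p))
    = ((m.ascFactorial t : ℕ) : ZMod p) := by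
  induction t with
  | zero => simp
  | succ t ih =>
    rw [Finset.prod_range_succ, ih, Nat.ascFactorial_succ]
    push_cast
    ring

theorem stmt_7 (p : ℕ) (hp : p.Prime) (x₁ x₂ : ZMod p) :
    (((x₁.val + x₂.val) / p : ℕ) : ZMod p)
      = ∑ d ∈ Finset.Icc 1 (p - 1),
          (-1 : ZMod p) ^ d * ((d : ZMod p))⁻¹ *
            (∏ k ∈ Finset.range d, (x₁ - (k : ZMod p))) *
            ∏ k ∈ Finset.range (p - d), (x₂ - (k : ZMod p)) := by
  haveI hpf : Fact p.Prime := ⟨hp⟩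
  set a := x₁.val with ha
  set b := x₂.val with hb
  have hp2 : 2 ≤ p := hp.two_le
  have hap : a < p := ZMod.val_lt x₁
  have hbp : b < p := ZMod.val_lt x₂
  have hx1cast : x₁ = (a : ZMod p) := (ZMod.natCast_zmod_val x₁).symm
  have hx2cast : x₂ = (b : ZMod p) := (ZMod.natCast_zmod_val x₂).symm
  have prod1 : ∀ d, ∏ k ∈ Finset.range d, (x₁ - (k : ZMod p))
      = ((a.descFactorial d : ℕ) : ZMod p) := by
    intro d
    rw [hx1cast, Finset.prod_range_natCast_sub, Nat.descFactorial_eq_prod_range]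
  have prodzero2 : ∀ t, b < t → ∏ k ∈ Finset.range t, (x₂ - (k : ZMod p)) = 0 := by
    intro t ht
    apply Finset.prod_eq_zero (Finset.mem_range.2 ht)
    rw [hx2cast, sub_self]
  by_cases hab : a + b < p
  · -- no carry
    rw [Nat.div_eq_of_lt hab, Nat.cast_zero]
    symm
    apply Finset.sum_eq_zero
    intro d hd
    rcases le_or_gt d a with hda | hda
    · rw [prodzero2 (p - d) (by omega), mul_zero]
    · rw [prod1 d, Nat.descFactorial_eq_zero_iff_lt.2 hda, Nat.cast_zero,
        mul_zero, zero_mul]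
  · -- carry = 1
    push_neg at hab
    have lhs1 : (a + b) / p = 1 :=
      Nat.div_eq_of_lt_le (by omega) (by omega)
    rw [lhs1, Nat.cast_one]
    set m := p - b with hmdef
    set n := a - m with hndef
    have hm1 : 1 ≤ m := by omega
    have hma : m ≤ a := by omega
    have hmn : m + n = a := by omega
    have hx2m : x₂ = -((m : ℕ) : ZMod p) := by
      rw [hx2cast]
      have h := congrArg (Nat.cast : ℕ → ZMod p) (show b + m = p by omega)
      rw [Nat.cast_add, ZMod.natCast_self] at h
      exact eq_neg_of_add_eq_zero_left h
    -- restrict the sum to Icc m a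
    rw [← Finset.sum_subset (show Finset.Icc m a ⊆ Finset.Icc 1 (p-1) by
        intro d hd; simp only [Finset.mem_Icc] at *; omega)
      (by
        intro d hd hd2
        simp only [Finset.mem_Icc] at hd hd2
        rcases le_or_gt d a with hda | hda
        · have : d < m := by omega
          rw [prodzero2 (p - d) (by omega), mul_zero]
        · rw [prod1 d, Nat.descFactorial_eq_zero_iff_lt.2 hda, Nat.cast_zero,
            mul_zero, zero_mul])]
    -- reindex
    have hIcc : Finset.Icc m a
        = (Finset.range (n+1)).map ⟨fun j => m + j, add_right_injective m⟩ := by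
      ext d
      simp only [Finset.mem_Icc, Finset.mem_map, Finset.mem_range,
        Function.Embedding.coeFn_mk]
      constructor
      · intro h; exact ⟨d - m, by omega, by omega⟩
      · rintro ⟨j, hj, rfl⟩; omega
    rw [hIcc, Finset.sum_map]
    simp only [Function.Embedding.coeFn_mk]
    -- per-term evaluation
    have hfacne : ((a ! : ℕ) : ZMod p) ≠ 0 := fac_ne p a hp hap
    have hterm : ∀ j ∈ range (n+1),
        (-1 : ZMod p) ^ (m+j) * (((m+j : ℕ) : ZMod p))⁻¹ *
            (∏ k ∈ Finset.range (m+j), (x₁ - (k : ZMod p))) *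
            ∏ k ∈ Finset.range (p - (m+j)), (x₂ - (k : ZMod p))
          = ((a ! : ℕ) : ZMod p)⁻¹ *
              ((-1 : ZMod p)^j * ((a.descFactorial (m+j) : ℕ) : ZMod p) *
                (((a ! / ((m+j) * (j ! * (m-1)!)) : ℕ) : ℕ) : ZMod p)) := by
      intro j hj
      have hjn : j ≤ n := by simp at hj; omega
      have hmjp : m + j < p := by omega
      set t := p - (m+j) with htdef
      have ht1 : 1 ≤ t := by omega
      -- x₂ product
      have prodx2 : ∏ k ∈ Finset.range t, (x₂ - (k : ZMod p))
          = (-1 : ZMod p)^t * ((m.ascFactorial t : ℕ) : ZMod p) := by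
        have e : ∀ k ∈ Finset.range t, x₂ - (k : ZMod p)
            = (-1) * (((m : ℕ) : ZMod p) + (k : ZMod p)) := by
          intro k _; rw [hx2m]; ring
        rw [Finset.prod_congr rfl e, Finset.prod_mul_distrib, Finset.prod_const,
          Finset.card_range, prod_asc_zmod]
      rw [prod1, prodx2]
      -- facts
      set u := ((m+j : ℕ) : ZMod p) with hudef
      set v := ((j ! : ℕ) : ZMod p) with hvdef
      set w := (((m-1)! : ℕ) : ZMod p) with hwdef
      set A := ((m.ascFactorial t : ℕ) : ZMod p) with hAdef
      set D := ((a.descFactorial (m+j) : ℕ) : ZMod p) with hDdef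
      set F := ((a ! : ℕ) : ZMod p) with hFdef
      set C := (((a ! / ((m+j) * (j ! * (m-1)!)) : ℕ) : ℕ) : ZMod p) with hCdef
      have hu : u ≠ 0 := by
        rw [hudef, Ne, ZMod.natCast_eq_zero_iff]
        intro hdv
        have := Nat.le_of_dvd (by omega) hdv
        omega
      have hv : v ≠ 0 := fac_ne p j hp (by omega)
      have hw : w ≠ 0 := fac_ne p (m-1) hp (by omega)
      have hsign : (-1 : ZMod p)^(m+j) * (-1 : ZMod p)^t = -1 := by
        rw [← pow_add, show m + j + t = p by omega, ZMod.pow_card]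
      have hAw : w * A * v = (-1 : ZMod p)^(j+1) := by
        have hnat : (m-1)! * m.ascFactorial t = (p-1-j)! := by
          have := Nat.factorial_mul_ascFactorial' m t hm1
          rw [show m + t - 1 = p-1-j by omega] at this
          exact this
        have hw2 := wilson_fac p j (by omega)
        rw [hwdef, hAdef, ← Nat.cast_mul, hnat]
        exact hw2
      have hc : C * (u * (v * w)) = F := by
        rw [hCdef, hudef, hvdef, hwdef, hFdef, ← Nat.cast_mul, ← Nat.cast_mul,
          ← Nat.cast_mul]
        congr 1
        have hdvd : (m+j) * (j ! * (m-1)!) ∣ a ! := by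
          have h1 : j ! * (m-1)! ∣ (j + (m-1))! :=
            Nat.factorial_mul_factorial_dvd_factorial_add _ _
          have h2 : (m+j) * (j + (m-1))! = (m+j)! := by
            rw [show m + j = (j + (m-1)) + 1 by omega, Nat.factorial_succ]
          have h3 := mul_dvd_mul_left (m+j) h1
          rw [h2] at h3
          exact h3.trans (Nat.factorial_dvd_factorial (by omega))
        exact Nat.div_mul_cancel hdvd
      refine mul_right_cancel₀ (mul_ne_zero hv hw) ?_
      have hu' := mul_inv_cancel₀ hu
      have hF' := mul_inv_cancel₀ hfacne
      linear_combination (u⁻¹ * D * A * v * w) * hsign - (u⁻¹ * D) * hAw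
        - (F⁻¹ * (-1 : ZMod p)^j * D * u⁻¹) * hc
        + (F⁻¹ * (-1 : ZMod p)^j * D * C * v * w) * hu' - (u⁻¹ * (-1 : ZMod p)^j * D) * hF'
    rw [Finset.sum_congr rfl hterm, ← Finset.mul_sum]
    have hsum : ∑ j ∈ range (n+1),
        ((-1 : ZMod p)^j * ((a.descFactorial (m+j) : ℕ) : ZMod p) *
          (((a ! / ((m+j) * (j ! * (m-1)!)) : ℕ) : ℕ) : ZMod p)) = ((a ! : ℕ) : ZMod p) := by
      have h := intkey n m hm1
      rw [hmn] at h
      have h2 := congrArg (fun z : ℤ => (z : ZMod p)) h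
      simp only [Int.cast_sum, Int.cast_mul, Int.cast_pow, Int.cast_neg, Int.cast_one,
        Int.cast_natCast] at h2
      exact h2
    rw [hsum, inv_mul_cancel₀ hfacne]
end

section
/- Let p be a prime and define ψ_1 : F_p × F_p → F_p by ψ_1(x,y) = ⌊(x_Z · y_Z)/p⌋ mod p, the carry to the next digit in the multiplication of two base-p digits. Then for all x, y, z ∈ F_p: ψ_1(x,y)·z + ψ_1(xy, z) = x·ψ_1(y,z) + ψ_1(x, yz), where products like xy are taken in F_p. -/
theorem stmt_9 (p : ℕ) (hp : p.Prime) (x y z : ZMod p) :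
    (((x.val * y.val / p % p : ℕ) : ZMod p)) * z
        + (((x * y).val * z.val / p % p : ℕ) : ZMod p)
      = x * (((y.val * z.val / p % p : ℕ) : ZMod p))
          + ((x.val * (y * z).val / p % p : ℕ) : ZMod p) := by
  have hp0 : 0 < p := hp.pos
  haveI : NeZero p := ⟨hp0.ne'⟩
  have key : ∀ a b : ZMod p, a.val * b.val = (a * b).val + p * (a.val * b.val / p) := by
    intro a b
    rw [ZMod.val_mul]
    exact (Nat.mod_add_div _ _).symm
  set q1 := x.val * y.val / p with hq1
  set q2 := (x * y).val * z.val / p with hq2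
  set q3 := y.val * z.val / p with hq3
  set q4 := x.val * (y * z).val / p with hq4
  have h1 := key x y
  have h2 := key (x * y) z
  have h3 := key y z
  have h4 := key x (y * z)
  have e1 : x.val * y.val * z.val = (x * y * z).val + p * (q1 * z.val + q2) := by
    rw [h1, add_mul, h2]; ring
  have e2 : x.val * y.val * z.val = (x * (y * z)).val + p * (x.val * q3 + q4) := by
    rw [mul_assoc, h3, mul_add, h4]; ring
  have hassoc : (x * y * z).val = (x * (y * z)).val := by rw [mul_assoc]
  have hnat : q1 * z.val + q2 = x.val * q3 + q4 := by
    have h := e1.symm.trans e2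
    rw [hassoc] at h
    exact Nat.eq_of_mul_eq_mul_left hp0 (Nat.add_left_cancel h)
  have hc := congrArg (Nat.cast : ℕ → ZMod p) hnat
  push_cast at hc
  simp only [ZMod.natCast_mod, ZMod.natCast_val, ZMod.cast_id] at hc ⊢
  exact hc
end

section
/- Let p be an odd prime. There exists a function Ψ : F_p → F_p with Ψ(0) determined by the normalization such that for all x, y ∈ F_p, the multiplication carry ψ_1(x,y) := (⌊x_Z y_Z / p⌋ mod p) satisfies ψ_1(x,y) = xy·(Ψ(xy) − Ψ(x) − Ψ(y) + Ψ(1)). -/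
theorem stmt_11 (p : ℕ) (hp : p.Prime) (hodd : Odd p) :
    ∃ Ψ : ZMod p → ZMod p, ∀ x y : ZMod p,
      ((x.val * y.val / p % p : ℕ) : ZMod p)
        = x * y * (Ψ (x * y) - Ψ x - Ψ y + Ψ 1) := by
  haveI : Fact p.Prime := ⟨hp⟩
  have hp0 : (p : ℤ) ≠ 0 := by exact_mod_cast hp.pos.ne'
  set q : ℕ → ℕ := fun n => (n ^ p - n) / p with hqdef
  have hpq : ∀ n : ℕ, (p : ℤ) * q n = (n : ℤ) ^ p - n := by
    intro n
    have h1 : n ≤ n ^ p := Nat.le_self_pow hp.pos.ne' n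
    have hdvd : p ∣ n ^ p - n := by
      have : ((n ^ p - n : ℕ) : ZMod p) = 0 := by
        push_cast [h1]
        rw [ZMod.pow_card]; ring
      exact (ZMod.natCast_eq_zero_iff _ _).mp this
    have h2 : p * q n = n ^ p - n := Nat.mul_div_cancel' hdvd
    have h3 : ((p * q n : ℕ) : ℤ) = ((n ^ p - n : ℕ) : ℤ) := Nat.cast_inj.mpr h2
    push_cast [h1] at h3
    exact h3
  refine ⟨fun a => (q a.val : ZMod p) * a⁻¹, fun x y => ?_⟩
  rcases eq_or_ne x 0 with rfl | hx
  · simp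
  rcases eq_or_ne y 0 with rfl | hy
  · simp
  have hxy : x * y ≠ 0 := mul_ne_zero hx hy
  set X := x.val with hX
  set Y := y.val with hY
  set Z := (x * y).val with hZ
  set c := X * Y / p with hc
  -- c < p
  have hclt : c < p := by
    have := Nat.mul_lt_mul'' (ZMod.val_lt x) (ZMod.val_lt y)
    exact Nat.div_lt_of_lt_mul this
  have hcmod : c % p = c := Nat.mod_eq_of_lt hclt
  -- integer relation X*Y = Z + p*c
  have hzmul : Z = X * Y % p := by
    rw [hZ, hX, hY, ZMod.val_mul]
  have hint : (X : ℤ) * Y = Z + p * c := by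
    have := Nat.div_add_mod (X * Y) p
    have h2 : p * c + Z = X * Y := by rw [hzmul, hc]; omega
    exact_mod_cast by push_cast [← h2]; ring
  -- p^2 ∣ (X*Y)^p - Z^p
  have hsq : (p : ℤ) ^ 2 ∣ ((X : ℤ) * Y) ^ p - (Z : ℤ) ^ p := by
    have h := dvd_sub_pow_of_dvd_sub (R := ℤ) (p := p) (a := (X : ℤ) * Y) (b := (Z : ℤ))
      (by rw [hint]; exact ⟨c, by ring⟩) 1
    simpa using h
  obtain ⟨k, hk⟩ := hsq
  -- key congruence
  have hkey : (p : ℤ) ∣ (q Z : ℤ) - Y * q X - X * q Y - c := by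
    refine ⟨(q X : ℤ) * q Y - k, ?_⟩
    have e : (p : ℤ) * ((q Z : ℤ) - Y * q X - X * q Y - c)
        = ((Z:ℤ)^p - Z) - (Y:ℤ) * ((X:ℤ)^p - X) - (X:ℤ) * ((Y:ℤ)^p - Y)
          - ((X:ℤ)*Y - Z) := by
      rw [← hpq X, ← hpq Y, ← hpq Z]
      have : (X : ℤ) * Y - Z = p * c := by rw [hint]; ring
      rw [this]; ring
    have e2 : ((Z:ℤ)^p - Z) - (Y:ℤ) * ((X:ℤ)^p - X) - (X:ℤ) * ((Y:ℤ)^p - Y)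
          - ((X:ℤ)*Y - Z)
        = -(((X:ℤ)*Y)^p - (Z:ℤ)^p) + ((X:ℤ)^p - X) * ((Y:ℤ)^p - Y) := by
      ring
    refine mul_left_cancel₀ hp0 ?_
    rw [e, e2, hk, ← hpq X, ← hpq Y]
    ring
  -- cast to ZMod p
  have hcast : ((c : ℕ) : ZMod p) = (q Z : ZMod p) - y * q X - x * q Y := by
    have h0 : (((q Z : ℤ) - Y * q X - X * q Y - c : ℤ) : ZMod p) = 0 := by
      exact_mod_cast (ZMod.intCast_zmod_eq_zero_iff_dvd _ _).mpr hkey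
    have hxv : ((X : ℕ) : ZMod p) = x := by rw [hX, ZMod.natCast_val, ZMod.cast_id]
    have hyv : ((Y : ℕ) : ZMod p) = y := by rw [hY, ZMod.natCast_val, ZMod.cast_id]
    push_cast at h0
    rw [hxv, hyv] at h0
    linear_combination -h0
  rw [hcmod, hcast]
  beta_reduce
  -- now compute the RHS
  have hΨ1 : (q (1 : ZMod p).val : ZMod p) * (1 : ZMod p)⁻¹ = 0 := by
    rw [ZMod.val_one, hqdef]
    simp
  rw [hΨ1]
  have hxi : x * x⁻¹ = 1 := mul_inv_cancel₀ hx
  have hyi : y * y⁻¹ = 1 := mul_inv_cancel₀ hy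
  have hxyi : (x * y) * (x * y)⁻¹ = 1 := mul_inv_cancel₀ hxy
  calc (q Z : ZMod p) - y * q X - x * q Y
      = (q Z : ZMod p) * ((x*y) * (x*y)⁻¹) - y * q X * (x * x⁻¹) - x * q Y * (y * y⁻¹)
        + 0 := by rw [hxi, hyi, hxyi]; ring
    _ = x * y * ((q Z : ZMod p) * (x*y)⁻¹ - (q X : ZMod p) * x⁻¹
          - (q Y : ZMod p) * y⁻¹ + 0) := by ring
end

section
/- Let p be an odd prime. For every x ∈ F_p with x ≠ 0, define Ψ̄(x) ∈ F_p to be the image under reduction mod p of (x̃·[x]^{-1} − 1)/p, where x̃ ∈ (Z/p^2Z)^× is the lift of x via the representative in {1,...,p-1}, and [x] = x̃^p is the Teichmüller lift. Then for all nonzero x,y ∈ F_p: ψ_1(x,y)/(xy) = Ψ̄(x) + Ψ̄(y) − Ψ̄(xy), where ψ_1(x,y) = ⌊x_Z y_Z / p⌋ mod p. -/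
private lemma binom_aux {R : Type*} [CommRing R] (c t : R) (ht : t * t = 0) :
    ∀ n : ℕ, (c + t) ^ (n + 1) = c ^ (n + 1) + (n + 1) * c ^ n * t := by
  intro n
  induction n with
  | zero => push_cast; ring
  | succ n ih =>
    have h1 : (c + t) ^ (n + 1 + 1) = (c + t) ^ (n + 1) * (c + t) := by ring
    rw [h1, ih]
    push_cast
    linear_combination ((n:R) + 1) * c ^ n * ht

private lemma pmul_zero (p : ℕ) [Fact p.Prime] (γ : ZMod (p^2))
    (h : (p : ZMod (p^2)) * γ = 0) : ((γ.val : ℕ) : ZMod p) = 0 := by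
  have hγ : ((γ.val : ℕ) : ZMod (p^2)) = γ := by rw [ZMod.natCast_val, ZMod.cast_id]
  rw [← hγ, ← Nat.cast_mul] at h
  rw [ZMod.natCast_eq_zero_iff] at h ⊢
  obtain ⟨k, hk⟩ := h
  refine ⟨k, Nat.eq_of_mul_eq_mul_left (Fact.out (p := p.Prime)).pos ?_⟩
  rw [hk]; ring

private lemma decomp (p : ℕ) [Fact p.Prime] (u : ZMod (p^2))
    (h : (ZMod.castHom (dvd_pow_self p two_ne_zero) (ZMod p)) u = 1) :
    u = 1 + ((p * ((u - 1).val / p) : ℕ) : ZMod (p^2)) := by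
  have h1 : (((u - 1).val : ℕ) : ZMod p) = 0 := by
    rw [ZMod.natCast_val, ← ZMod.castHom_apply (h := dvd_pow_self p two_ne_zero), map_sub, h,
      map_one, sub_self]
  rw [ZMod.natCast_eq_zero_iff] at h1
  rw [Nat.mul_div_cancel' h1, ZMod.natCast_val, ZMod.cast_id]
  ring

private lemma binom2 {R : Type*} [CommRing R] (c t : R) (ht : t * t = 0)
    (n : ℕ) (hn : n ≠ 0) (hnt : (n : R) * t = 0) : (c + t) ^ n = c ^ n := by
  obtain ⟨q, rfl⟩ : ∃ q, n = q + 1 := ⟨n - 1, by omega⟩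
  rw [binom_aux c t ht q]
  push_cast at hnt
  linear_combination c ^ q * hnt

theorem stmt_12 (p : ℕ) [Fact p.Prime] (hodd : Odd p)
    (Ψbar : ZMod p → ZMod p)
    (hΨbar : ∀ x : ZMod p, x ≠ 0 →
      Ψbar x = ((((x.val : ZMod (p ^ 2)) * (((x.val : ZMod (p ^ 2))) ^ p)⁻¹ - 1).val
          / p : ℕ) : ZMod p))
    (x y : ZMod p) (hx : x ≠ 0) (hy : y ≠ 0) :
    ((x.val * y.val / p % p : ℕ) : ZMod p) / (x * y)
      = Ψbar x + Ψbar y - Ψbar (x * y) := by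
  have hp : p.Prime := Fact.out
  have hxy : x * y ≠ 0 := mul_ne_zero hx hy
  set π := ZMod.castHom (dvd_pow_self p two_ne_zero) (ZMod p) with hπdef
  -- units
  have key : ∀ z : ZMod p, z ≠ 0 → IsUnit ((z.val : ℕ) : ZMod (p^2)) := by
    intro z hz
    rw [ZMod.isUnit_iff_coprime]
    apply Nat.Coprime.pow_right
    rw [Nat.coprime_comm]
    refine hp.coprime_iff_not_dvd.mpr (Nat.not_dvd_of_pos_of_lt ?_ (ZMod.val_lt z))
    exact Nat.pos_of_ne_zero fun h => hz (by rwa [ZMod.val_eq_zero] at h)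
  have hπz : ∀ z : ZMod p, π ((z.val : ℕ) : ZMod (p^2)) = z := by
    intro z
    rw [map_natCast, ZMod.natCast_val, ZMod.cast_id]
  have hπinv : ∀ z : ZMod p, z ≠ 0 →
      π (((((z.val : ℕ) : ZMod (p^2))) ^ p)⁻¹) = z⁻¹ := by
    intro z hz
    have hu : IsUnit ((((z.val : ℕ) : ZMod (p^2))) ^ p) := (key z hz).pow p
    have h1 : π ((((z.val : ℕ) : ZMod (p^2))) ^ p) * π (((((z.val : ℕ) : ZMod (p^2))) ^ p)⁻¹)
        = 1 := by rw [← map_mul, ZMod.mul_inv_of_unit _ hu, map_one]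
    have h2 : π ((((z.val : ℕ) : ZMod (p^2))) ^ p) = z := by
      rw [map_pow, hπz, ZMod.pow_card]
    rw [h2] at h1
    exact eq_inv_of_mul_eq_one_left (by rw [mul_comm]; exact h1)
  -- names
  set u : ZMod (p^2) := ((x.val : ℕ) : ZMod (p^2)) * ((((x.val : ℕ) : ZMod (p^2))) ^ p)⁻¹ with hu
  set v : ZMod (p^2) := ((y.val : ℕ) : ZMod (p^2)) * ((((y.val : ℕ) : ZMod (p^2))) ^ p)⁻¹ with hv
  set w : ZMod (p^2) := (((x*y).val : ℕ) : ZMod (p^2)) * (((((x*y).val : ℕ) : ZMod (p^2))) ^ p)⁻¹ with hw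
  set e : ZMod (p^2) := (((((x*y).val : ℕ) : ZMod (p^2))) ^ p)⁻¹ with he
  set m : ℕ := x.val * y.val / p with hm
  -- the product decomposition in ℕ
  have hnat : x.val * y.val = (x*y).val + p * m := by
    rw [hm, ZMod.val_mul]
    exact (Nat.mod_add_div _ _).symm
  have hab : ((x.val : ℕ) : ZMod (p^2)) * ((y.val : ℕ) : ZMod (p^2))
      = (((x*y).val : ℕ) : ZMod (p^2)) + ((p * m : ℕ) : ZMod (p^2)) := by
    rw [← Nat.cast_mul, hnat, Nat.cast_add]
  -- t² = 0 and p·t = 0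
  have ht2 : ((p * m : ℕ) : ZMod (p^2)) * ((p * m : ℕ) : ZMod (p^2)) = 0 := by
    rw [← Nat.cast_mul, ZMod.natCast_eq_zero_iff]
    exact ⟨m * m, by ring⟩
  have hpt : (p : ZMod (p^2)) * ((p * m : ℕ) : ZMod (p^2)) = 0 := by
    rw [← Nat.cast_mul (α := ZMod (p^2)) p, ZMod.natCast_eq_zero_iff]
    exact ⟨m, by ring⟩
  -- (c + pm)^p = c^p
  have hpow : ((((x*y).val : ℕ) : ZMod (p^2)) + ((p * m : ℕ) : ZMod (p^2))) ^ p
      = ((((x*y).val : ℕ) : ZMod (p^2))) ^ p :=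
    binom2 _ _ ht2 p hp.ne_zero hpt
  -- main identity: u * v = w + pm * e
  have hwu : IsUnit ((((x*y).val : ℕ) : ZMod (p^2)) ^ p) := (key _ hxy).pow p
  have hinv2 : ((((x.val : ℕ) : ZMod (p^2))) ^ p)⁻¹ * ((((y.val : ℕ) : ZMod (p^2))) ^ p)⁻¹
      = e := by
    have h1 : (((x*y).val : ℕ) : ZMod (p^2)) ^ p *
        (((((x.val : ℕ) : ZMod (p^2))) ^ p)⁻¹ * ((((y.val : ℕ) : ZMod (p^2))) ^ p)⁻¹) = 1 := by
      have : ((((x*y).val : ℕ) : ZMod (p^2))) ^ p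
          = (((x.val : ℕ) : ZMod (p^2))) ^ p * (((y.val : ℕ) : ZMod (p^2))) ^ p := by
        rw [← mul_pow, hab, hpow]
      rw [this]
      have e1 := ZMod.mul_inv_of_unit _ ((key x hx).pow p)
      have e2 := ZMod.mul_inv_of_unit _ ((key y hy).pow p)
      calc ((((x.val:ℕ):ZMod (p^2)))^p * (((y.val:ℕ):ZMod (p^2)))^p) *
            (((((x.val:ℕ):ZMod (p^2)))^p)⁻¹ * ((((y.val:ℕ):ZMod (p^2)))^p)⁻¹)
          = ((((x.val:ℕ):ZMod (p^2)))^p * ((((x.val:ℕ):ZMod (p^2)))^p)⁻¹) *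
            ((((y.val:ℕ):ZMod (p^2)))^p * ((((y.val:ℕ):ZMod (p^2)))^p)⁻¹) := by ring
        _ = 1 := by rw [e1, e2, one_mul]
    have h2 : (((x*y).val : ℕ) : ZMod (p^2)) ^ p * e = 1 := ZMod.mul_inv_of_unit _ hwu
    exact hwu.mul_left_cancel (h1.trans h2.symm)
  have hmain : u * v = w + ((p * m : ℕ) : ZMod (p^2)) * e := by
    rw [hu, hv, hw]
    calc ((x.val:ℕ):ZMod (p^2)) * ((((x.val:ℕ):ZMod (p^2)))^p)⁻¹ *
          (((y.val:ℕ):ZMod (p^2)) * ((((y.val:ℕ):ZMod (p^2)))^p)⁻¹)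
        = (((x.val:ℕ):ZMod (p^2)) * ((y.val:ℕ):ZMod (p^2))) *
          (((((x.val:ℕ):ZMod (p^2)))^p)⁻¹ * ((((y.val:ℕ):ZMod (p^2)))^p)⁻¹) := by ring
      _ = ((((x*y).val:ℕ):ZMod (p^2)) + ((p*m:ℕ):ZMod (p^2))) * e := by rw [hab, hinv2]
      _ = (((x*y).val:ℕ):ZMod (p^2)) * e + ((p*m:ℕ):ZMod (p^2)) * e := by ring
  -- π of u, v, w is 1
  have hπu : π u = 1 := by rw [hu, map_mul, hπz, hπinv x hx, mul_inv_cancel₀ hx]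
  have hπv : π v = 1 := by rw [hv, map_mul, hπz, hπinv y hy, mul_inv_cancel₀ hy]
  have hπw : π w = 1 := by rw [hw, map_mul, hπz, hπinv _ hxy, mul_inv_cancel₀ hxy]
  -- decompose
  set du : ℕ := (u - 1).val / p with hdu
  set dv : ℕ := (v - 1).val / p with hdv
  set dw : ℕ := (w - 1).val / p with hdw
  have Eu := decomp p u hπu
  have Ev := decomp p v hπv
  have Ew := decomp p w hπw
  rw [← hdu] at Eu
  rw [← hdv] at Ev
  rw [← hdw] at Ew
  have E := hmain
  rw [Eu, Ev, Ew] at E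
  have hpp : (p : ZMod (p^2)) * (p : ZMod (p^2)) = 0 := by
    rw [← Nat.cast_mul, ← pow_two, ZMod.natCast_self]
  push_cast at E
  have hγ : (p : ZMod (p^2)) *
      ((du : ZMod (p^2)) + (dv : ZMod (p^2)) - (dw : ZMod (p^2)) - (m : ZMod (p^2)) * e) = 0 := by
    linear_combination E - (du : ZMod (p^2)) * (dv : ZMod (p^2)) * hpp
  -- project to ZMod p
  have hγ' := pmul_zero p _ hγ
  rw [ZMod.natCast_val, ← ZMod.castHom_apply (h := dvd_pow_self p two_ne_zero)] at hγ'
  rw [← hπdef] at hγ'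
  have hπe : π e = (x * y)⁻¹ := hπinv _ hxy
  rw [map_sub, map_sub, map_add, map_mul, map_natCast, map_natCast, map_natCast, map_natCast,
    hπe] at hγ'
  -- finish
  rw [hΨbar x hx, hΨbar y hy, hΨbar _ hxy]
  rw [ZMod.natCast_mod, div_eq_mul_inv]
  have hgoal : ((x.val * y.val / p : ℕ) : ZMod p) = (m : ZMod p) := by rw [hm]
  rw [hgoal, mul_inv]
  have : (m : ZMod p) * ((x*y)⁻¹) = (du : ZMod p) + (dv : ZMod p) - (dw : ZMod p) := by
    linear_combination -hγ'
  rw [mul_inv] at this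
  exact this
end

section
/- Let p be an odd prime and x ∈ {1,...,p-1}. Define the Fermat quotient q_p(x) = (x^{p-1} − 1)/p ∈ Z. Then, with Ψ̄ as in the cohomological construction (Ψ̄(x) = ((x̃[x]^{-1} − 1)/p) mod p), we have x·Ψ̄(x) = −x·(q_p(x) mod p) in F_p, i.e., Ψ̄(x) = −q_p(x) mod p. -/
theorem stmt_14 (p x : ℕ) (hp : p.Prime) (hodd : Odd p)
    (hx1 : 1 ≤ x) (hx2 : x ≤ p - 1) :
    (((((x : ZMod (p ^ 2)) * (((x : ZMod (p ^ 2))) ^ p)⁻¹ - 1).val / p : ℕ) : ZMod p)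
      = -(((x ^ (p - 1) - 1) / p : ℕ) : ZMod p)) := by
  haveI : Fact p.Prime := ⟨hp⟩
  have hp0 : 0 < p := hp.pos
  have hxltp : x < p := lt_of_le_of_lt hx2 (Nat.sub_lt hp0 one_pos)
  have hndvd : ¬ p ∣ x := fun h => absurd (Nat.le_of_dvd (by omega) h) (by omega)
  -- Fermat
  have hxz : (x : ZMod p) ≠ 0 := by
    rwa [Ne, ZMod.natCast_eq_zero_iff]
  have hferm : (x : ZMod p) ^ (p - 1) = 1 := ZMod.pow_card_sub_one_eq_one hxz
  have hone : 1 ≤ x ^ (p - 1) := Nat.one_le_pow _ _ hx1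
  have hdvd : p ∣ x ^ (p - 1) - 1 := by
    have : (x : ℕ) ^ (p-1) ≡ 1 [MOD p] := by
      apply (ZMod.natCast_eq_natCast_iff (x ^ (p-1)) 1 p).mp
      push_cast
      simpa using hferm
    exact (Nat.modEq_iff_dvd' hone).mp this.symm
  set q := (x ^ (p - 1) - 1) / p with hqdef
  have hq : x ^ (p - 1) = 1 + p * q := by
    have h2 : p * q = x ^ (p - 1) - 1 := by
      rw [mul_comm]; exact Nat.div_mul_cancel hdvd
    omega
  haveI : NeZero (p^2) := ⟨pow_ne_zero 2 hp0.ne'⟩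
  set u : ZMod (p^2) := (x : ZMod (p^2)) with hu
  have hunit : IsUnit u := by
    rw [hu, ZMod.isUnit_iff_coprime]
    exact Nat.Coprime.pow_right 2 (Nat.coprime_comm.mp (hp.coprime_iff_not_dvd.mpr hndvd))
  have hpq2 : ((p : ZMod (p^2)) * q) ^ 2 = 0 := by
    have : ((p^2 : ℕ) : ZMod (p^2)) = 0 := ZMod.natCast_self _
    push_cast at this
    rw [mul_pow, show ((p:ZMod (p^2)))^2 = ((p^2:ℕ):ZMod (p^2)) by push_cast; ring, ZMod.natCast_self, zero_mul]
  have hup : IsUnit (u ^ p) := hunit.pow p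
  have hkey : u * (u ^ p)⁻¹ - 1 = -((p : ZMod (p^2)) * q) := by
    have hpow : u ^ (p - 1) = 1 + (p : ZMod (p^2)) * q := by
      rw [hu, ← Nat.cast_pow, hq]; push_cast; ring
    have hmul : (u ^ p) * (1 - (p : ZMod (p^2)) * q) = u := by
      have : u ^ p = u * u ^ (p - 1) := by
        rw [← pow_succ']
        congr 1
        omega
      rw [this, hpow]
      have expand : (1 + (p : ZMod (p^2)) * q) * (1 - (p : ZMod (p^2)) * q)
          = 1 - ((p : ZMod (p^2)) * q) ^ 2 := by ring
      rw [mul_assoc, expand, hpq2, sub_zero, mul_one]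
    have : u * (u ^ p)⁻¹ = 1 - (p : ZMod (p^2)) * q := by
      calc u * (u ^ p)⁻¹ = (u ^ p) * (1 - (p : ZMod (p^2)) * q) * (u ^ p)⁻¹ := by rw [hmul]
      _ = (1 - (p : ZMod (p^2)) * q) * ((u ^ p) * (u ^ p)⁻¹) := by ring
      _ = _ := by rw [ZMod.mul_inv_of_unit _ hup, mul_one]
    rw [this]; ring
  set r := q % p with hr
  have hrq : (q : ZMod p) = (r : ZMod p) := by rw [hr, ZMod.natCast_mod]
  have hpq : ((p : ZMod (p^2)) * q) = ((p * r : ℕ) : ZMod (p^2)) := by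
    conv_lhs => rw [show q = p * (q / p) + r from (Nat.div_add_mod q p).symm]
    push_cast
    rw [show ((p:ZMod (p^2))) * ((p:ZMod (p^2)) * (q/p : ℕ) + (r:ZMod (p^2)))
      = ((p^2:ℕ):ZMod (p^2)) * (q/p : ℕ) + (p:ZMod (p^2)) * r by push_cast; ring,
      ZMod.natCast_self, zero_mul, zero_add]
  rw [hkey, hpq, hrq]
  have hrlt : r < p := Nat.mod_lt _ hp0
  by_cases hr0 : r = 0
  · simp [hr0]
  · have hval : (-(((p * r : ℕ) : ZMod (p^2)))).val = p^2 - p * r := by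
      have hlt : p * r < p^2 := by
        have := hrlt
        calc p * r < p * p := (Nat.mul_lt_mul_left hp0).mpr hrlt
        _ = p^2 := (sq p).symm
      have hvpr : (((p * r : ℕ) : ZMod (p^2))).val = p * r := ZMod.val_natCast_of_lt hlt
      have hne : (((p * r : ℕ) : ZMod (p^2))) ≠ 0 := by
        rw [Ne, ZMod.natCast_eq_zero_iff]
        intro h
        have := Nat.le_of_dvd (by positivity) h
        omega
      rw [ZMod.neg_val, if_neg hne, hvpr]
    rw [hval]
    have : (p^2 - p * r) / p = p - r := by
      rw [sq, ← Nat.mul_sub, Nat.mul_div_cancel_left _ hp0]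
    rw [this, Nat.cast_sub hrlt.le, ZMod.natCast_self, zero_sub]
end

section
/- For addition of two single base-p digits with an incoming carry: for all x_1, x_2 ∈ F_p and γ ∈ {0,1} ⊂ F_p, the carry ⌊((x_1)_Z + (x_2)_Z + γ_Z)/p⌋ (as an element of F_p) equals φ_1(x_1,x_2) + γ·(1 − (x_1 + x_2 + 1)^{p-1}), where φ_1(x_1,x_2) = ⌊((x_1)_Z + (x_2)_Z)/p⌋ mod p. -/
theorem stmt_18 (p : ℕ) (hp : p.Prime) (x₁ x₂ γ : ZMod p) (hγ : γ = 0 ∨ γ = 1) :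
    (((x₁.val + x₂.val + γ.val) / p : ℕ) : ZMod p)
      = (((x₁.val + x₂.val) / p % p : ℕ) : ZMod p)
          + γ * (1 - (x₁ + x₂ + 1) ^ (p - 1)) := by
  haveI : Fact p.Prime := ⟨hp⟩
  have hp2 : 2 ≤ p := hp.two_le
  have h1 : x₁.val < p := ZMod.val_lt x₁
  have h2 : x₂.val < p := ZMod.val_lt x₂
  have hmod : (x₁.val + x₂.val) / p % p = (x₁.val + x₂.val) / p := by
    apply Nat.mod_eq_of_lt
    have : (x₁.val + x₂.val) / p < 2 := Nat.div_lt_of_lt_mul (by omega)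
    omega
  rw [hmod]
  have hcast : ((x₁.val + x₂.val + 1 : ℕ) : ZMod p) = x₁ + x₂ + 1 := by
    push_cast [ZMod.natCast_val, ZMod.cast_id]
    ring
  rcases hγ with h | h
  · subst h
    simp
  · subst h
    rw [ZMod.val_one]
    by_cases hc : x₁.val + x₂.val = p - 1
    · have hz : x₁ + x₂ + 1 = 0 := by
        rw [← hcast, hc]
        have : p - 1 + 1 = p := by omega
        rw [this, ZMod.natCast_self]
      rw [hz, zero_pow (by omega), hc]
      have hpp : p - 1 + 1 = p := by omega
      rw [hpp, Nat.div_self (by omega), Nat.div_eq_of_lt (by omega)]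
      push_cast
      ring
    · have hnz : x₁ + x₂ + 1 ≠ 0 := by
        intro h0
        rw [← hcast] at h0
        have := (ZMod.natCast_eq_zero_iff _ _).mp h0
        rcases this with ⟨k, hk⟩
        have hk0 : k ≠ 0 := by rintro rfl; omega
        have hk2 : k < 2 := by
          by_contra hge
          have : p * 2 ≤ p * k := Nat.mul_le_mul_left p (by omega)
          omega
        have : k = 1 := by omega
        subst this
        omega
      rw [ZMod.pow_card_sub_one_eq_one hnz]
      have hdiv : (x₁.val + x₂.val + 1) / p = (x₁.val + x₂.val) / p := by
        by_cases hlt : x₁.val + x₂.val < p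
        · rw [Nat.div_eq_of_lt (by omega), Nat.div_eq_of_lt hlt]
        · rw [Nat.div_eq_of_lt_le (k := 1) (by omega) (by omega),
            Nat.div_eq_of_lt_le (k := 1) (by omega) (by omega)]
      rw [hdiv]
      ring
end
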